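/- Let V be a ℂ-vector space and let e_i, f_i, H_i (1 ≤ i ≤ m−1) be linear endomorphisms of V satisfying the Serre relations of sl_m: [H_i, H_j] = 0, [H_j, e_i] = a_{ji}·e_i, [H_j, f_i] = −a_{ji}·f_i, [e_i, f_j] = δ_{ij}·H_i, [e_i, e_j] = [f_i, f_j] = 0 whenever j ≠ i+1 and j ≠ i−1, and [e_i, [e_i, e_{i±1}]] = [f_i, [f_i, f_{i±1}]] = 0. Fix γ ∈ ℂ, and define X⁺_{i,t} := (1 − Q_i·γ)·γ^t·e_i, X⁻_{i,t} := γ^t·f_i, and J_{i,t} := γ^t·H_i for 1 ≤ i ≤ m−1 and t ∈ ℕ. Then the family X⁺_{i,t}, X⁻_{i,t}, J_{i,t} is a Q-deformed sl_m-current representation on V, i.e., it satisfies relations (L1)–(L6). -/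
import Mathlib


open Finset

/-- The Cartan integers `a_{ji}` of `sl_m`: `2` if `j = i`, `−1` if `|j − i| = 1`, `0` otherwise. -/
def cartan {m : ℕ} (j i : Fin (m - 1)) : ℂ :=
  if j = i then 2
  else if (j : ℕ) = (i : ℕ) + 1 ∨ (i : ℕ) = (j : ℕ) + 1 then -1 else 0

/-- A `Q`-deformed `sl_m`-current representation on a `ℂ`-vector space `V`:
the relations (L1)–(L6). -/
def IsSlmCurrentRep (m : ℕ) (Q : Fin (m - 1) → ℂ) {V : Type*} [AddCommGroup V] [Module ℂ V]
    (Xp Xm J : Fin (m - 1) → ℕ → Module.End ℂ V) : Prop :=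
  (∀ (i j : Fin (m - 1)) (s t : ℕ), J i s * J j t = J j t * J i s) ∧
  (∀ (i j : Fin (m - 1)) (s t : ℕ),
      J j s * Xp i t - Xp i t * J j s = cartan j i • Xp i (s + t)) ∧
  (∀ (i j : Fin (m - 1)) (s t : ℕ),
      J j s * Xm i t - Xm i t * J j s = -(cartan j i • Xm i (s + t))) ∧
  (∀ (i j : Fin (m - 1)) (s t : ℕ), Xp i t * Xm j s - Xm j s * Xp i t =
      if i = j then J i (s + t) - Q i • J i (s + t + 1) else 0) ∧
  (∀ (i j : Fin (m - 1)) (s t : ℕ), ¬((j : ℕ) = (i : ℕ) + 1 ∨ (i : ℕ) = (j : ℕ) + 1) →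
      Xp i t * Xp j s = Xp j s * Xp i t ∧ Xm i t * Xm j s = Xm j s * Xm i t) ∧
  (∀ (i j : Fin (m - 1)) (s t : ℕ), ((j : ℕ) = (i : ℕ) + 1 ∨ (i : ℕ) = (j : ℕ) + 1) →
      (Xp i (t + 1) * Xp j s - Xp j s * Xp i (t + 1) =
        Xp i t * Xp j (s + 1) - Xp j (s + 1) * Xp i t) ∧
      (Xm i (t + 1) * Xm j s - Xm j s * Xm i (t + 1) =
        Xm i t * Xm j (s + 1) - Xm j (s + 1) * Xm i t)) ∧
  (∀ (i j : Fin (m - 1)) (s t u : ℕ), ((j : ℕ) = (i : ℕ) + 1 ∨ (i : ℕ) = (j : ℕ) + 1) →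
      Xp i s * (Xp i t * Xp j u - Xp j u * Xp i t) -
          (Xp i t * Xp j u - Xp j u * Xp i t) * Xp i s = 0 ∧
      Xm i s * (Xm i t * Xm j u - Xm j u * Xm i t) -
          (Xm i t * Xm j u - Xm j u * Xm i t) * Xm i s = 0)

theorem stmt17 {m : ℕ} (hm : 2 ≤ m) (Q : Fin (m - 1) → ℂ)
    {V : Type*} [AddCommGroup V] [Module ℂ V]
    (e f H : Fin (m - 1) → Module.End ℂ V)
    (hHH : ∀ i j : Fin (m - 1), H i * H j = H j * H i)
    (hHe : ∀ i j : Fin (m - 1), H j * e i - e i * H j = cartan j i • e i)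
    (hHf : ∀ i j : Fin (m - 1), H j * f i - f i * H j = -(cartan j i • f i))
    (hef : ∀ i j : Fin (m - 1), e i * f j - f j * e i = if i = j then H i else 0)
    (hee : ∀ i j : Fin (m - 1), ¬((j : ℕ) = (i : ℕ) + 1 ∨ (i : ℕ) = (j : ℕ) + 1) →
      e i * e j = e j * e i ∧ f i * f j = f j * f i)
    (hSerre : ∀ i j : Fin (m - 1), ((j : ℕ) = (i : ℕ) + 1 ∨ (i : ℕ) = (j : ℕ) + 1) →
      e i * (e i * e j - e j * e i) - (e i * e j - e j * e i) * e i = 0 ∧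
      f i * (f i * f j - f j * f i) - (f i * f j - f j * f i) * f i = 0)
    (γ : ℂ) :
    IsSlmCurrentRep m Q
      (fun i t => ((1 - Q i * γ) * γ ^ t) • e i)
      (fun i t => (γ ^ t) • f i)
      (fun i t => (γ ^ t) • H i) := by
  refine ⟨?_, ?_, ?_, ?_, ?_, ?_, ?_⟩
  · intro i j s t
    simp only [smul_mul_assoc, mul_smul_comm, smul_smul]
    rw [hHH i j]
    ring_nf
  · intro i j s t
    calc (γ ^ s) • H j * (((1 - Q i * γ) * γ ^ t) • e i)
          - ((1 - Q i * γ) * γ ^ t) • e i * ((γ ^ s) • H j)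
        = ((1 - Q i * γ) * γ ^ (s + t)) • (H j * e i - e i * H j) := by
          simp only [smul_mul_assoc, mul_smul_comm, smul_smul, smul_sub]; module
      _ = ((1 - Q i * γ) * γ ^ (s + t)) • (cartan j i • e i) := by rw [hHe i j]
      _ = cartan j i • (((1 - Q i * γ) * γ ^ (s + t)) • e i) := by module
  · intro i j s t
    calc (γ ^ s) • H j * ((γ ^ t) • f i) - (γ ^ t) • f i * ((γ ^ s) • H j)
        = (γ ^ (s + t)) • (H j * f i - f i * H j) := by
          simp only [smul_mul_assoc, mul_smul_comm, smul_smul, smul_sub]; module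
      _ = (γ ^ (s + t)) • (-(cartan j i • f i)) := by rw [hHf i j]
      _ = -(cartan j i • ((γ ^ (s + t)) • f i)) := by module
  · intro i j s t
    have key : ((1 - Q i * γ) * γ ^ t) • e i * ((γ ^ s) • f j)
          - (γ ^ s) • f j * (((1 - Q i * γ) * γ ^ t) • e i)
        = ((1 - Q i * γ) * γ ^ (s + t)) • (e i * f j - f j * e i) := by
      simp only [smul_mul_assoc, mul_smul_comm, smul_smul, smul_sub]; module
    rw [key, hef i j]
    by_cases hij : i = j
    · simp only [if_pos hij]
      subst hij
      rw [smul_smul]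
      match_scalars <;> ring
    · simp only [if_neg hij, smul_zero]
  · intro i j s t hne
    obtain ⟨h1, h2⟩ := hee i j hne
    constructor
    · simp only [smul_mul_assoc, mul_smul_comm, smul_smul, h1]; ring_nf
    · simp only [smul_mul_assoc, mul_smul_comm, smul_smul, h2]; ring_nf
  · intro i j s t _
    constructor
    · simp only [smul_mul_assoc, mul_smul_comm, smul_smul]
      match_scalars <;> ring
    · simp only [smul_mul_assoc, mul_smul_comm, smul_smul]
      match_scalars <;> ring
  · intro i j s t u hadj
    obtain ⟨h1, h2⟩ := hSerre i j hadj
    constructor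
    · calc ((1 - Q i * γ) * γ ^ s) • e i *
            (((1 - Q i * γ) * γ ^ t) • e i * (((1 - Q j * γ) * γ ^ u) • e j)
              - ((1 - Q j * γ) * γ ^ u) • e j * (((1 - Q i * γ) * γ ^ t) • e i))
          - (((1 - Q i * γ) * γ ^ t) • e i * (((1 - Q j * γ) * γ ^ u) • e j)
              - ((1 - Q j * γ) * γ ^ u) • e j * (((1 - Q i * γ) * γ ^ t) • e i)) *
            (((1 - Q i * γ) * γ ^ s) • e i)
          = ((1 - Q i * γ) * γ ^ s * ((1 - Q i * γ) * γ ^ t) * ((1 - Q j * γ) * γ ^ u)) •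
              (e i * (e i * e j - e j * e i) - (e i * e j - e j * e i) * e i) := by
            simp only [smul_mul_assoc, mul_smul_comm, smul_smul, smul_sub, mul_sub, sub_mul]
            module
        _ = 0 := by rw [h1, smul_zero]
    · calc (γ ^ s) • f i *
            ((γ ^ t) • f i * ((γ ^ u) • f j) - (γ ^ u) • f j * ((γ ^ t) • f i))
          - ((γ ^ t) • f i * ((γ ^ u) • f j) - (γ ^ u) • f j * ((γ ^ t) • f i)) *
            ((γ ^ s) • f i)
          = (γ ^ s * γ ^ t * γ ^ u) •
              (f i * (f i * f j - f j * f i) - (f i * f j - f j * f i) * f i) := by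
            simp only [smul_mul_assoc, mul_smul_comm, smul_smul, smul_sub, mul_sub, sub_mul]
            module
        _ = 0 := by rw [h2, smul_zero]
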